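/- For m ≥ 3, let T_m be the set of permutations τ ∈ S_m with τ_{m−1} = m and τ_m = m−1. A permutation π ∈ S_n avoids every pattern in T_m if and only if every element of its essential set E(π) has rank at most m−3. -/

import Mathlib

/-- `π` contains the pattern `τ`: there is a strictly increasing choice of positions
whose values appear in the same relative order as `τ`. -/
def Contains {n k : ℕ} (π : Equiv.Perm (Fin n)) (τ : Equiv.Perm (Fin k)) : Prop :=
  ∃ f : Fin k → Fin n, StrictMono f ∧ ∀ a b : Fin k, τ a < τ b ↔ π (f a) < π (f b)

/-- `π` avoids the pattern `τ`. -/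
def Avoids {n k : ℕ} (π : Equiv.Perm (Fin n)) (τ : Equiv.Perm (Fin k)) : Prop :=
  ¬ Contains π τ

/-- The pattern 1243 (in one-line notation), as a permutation of `Fin 4` (0-based). -/
def pat1243 : Equiv.Perm (Fin 4) := Equiv.swap 2 3

/-- The pattern 2143 (in one-line notation), as a permutation of `Fin 4` (0-based). -/
def pat2143 : Equiv.Perm (Fin 4) := Equiv.swap 0 1 * Equiv.swap 2 3

/-- A Schröder permutation avoids both 1243 and 2143. -/
def Schroeder {n : ℕ} (π : Equiv.Perm (Fin n)) : Prop :=
  Avoids π pat1243 ∧ Avoids π pat2143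

/-- The diagram of `π` (0-based coordinates): squares `(i,j)` with `π i > j` and
`π⁻¹ j > i`. -/
def Diagram {n : ℕ} (π : Equiv.Perm (Fin n)) : Set (Fin n × Fin n) :=
  {p | p.2 < π p.1 ∧ p.1 < π.symm p.2}

/-- The essential set of `π`: squares of the diagram whose east and south neighbours
are not in the diagram. -/
def EssSet {n : ℕ} (π : Equiv.Perm (Fin n)) : Set (Fin n × Fin n) :=
  {p | p ∈ Diagram π ∧
    (∀ i' : Fin n, (i' : ℕ) = (p.1 : ℕ) + 1 → (i', p.2) ∉ Diagram π) ∧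
    (∀ j' : Fin n, (j' : ℕ) = (p.2 : ℕ) + 1 → (p.1, j') ∉ Diagram π)}

/-- The rank of a square `(i,j)`: the number of positions `k < i` with `π k < j`. -/
def rank {n : ℕ} (π : Equiv.Perm (Fin n)) (p : Fin n × Fin n) : ℕ :=
  (Finset.univ.filter fun k : Fin n => k < p.1 ∧ π k < p.2).card


section Aux

variable {n m : ℕ}

/-- The pattern of an injective tuple `g : Fin m → Fin n`. -/
noncomputable def patternOf (g : Fin m → Fin n) (hg : Function.Injective g) :
    Equiv.Perm (Fin m) :=
  Equiv.ofBijective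
    (fun i => (Finset.orderIsoOfFin (Finset.image g Finset.univ)
        (by rw [Finset.card_image_of_injective _ hg, Finset.card_univ, Fintype.card_fin])).symm
      ⟨g i, Finset.mem_image_of_mem g (Finset.mem_univ i)⟩)
    (by
      refine (Fintype.bijective_iff_injective_and_card _).2 ⟨?_, rfl⟩
      intro a b hab
      apply hg
      have := (Finset.orderIsoOfFin (Finset.image g Finset.univ)
        (by rw [Finset.card_image_of_injective _ hg, Finset.card_univ,
          Fintype.card_fin])).symm.injective hab
      exact congrArg Subtype.val this)

lemma patternOf_lt_iff (g : Fin m → Fin n) (hg : Function.Injective g) (a b : Fin m) :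
    patternOf g hg a < patternOf g hg b ↔ g a < g b := by
  unfold patternOf
  simp only [Equiv.ofBijective_apply]
  rw [OrderIso.lt_iff_lt]
  exact Subtype.mk_lt_mk

lemma perm_eq_last {τ : Equiv.Perm (Fin m)} {x : Fin m} (hm : 0 < m)
    (h : ∀ y : Fin m, y ≠ x → τ y < τ x) : (τ x : ℕ) = m - 1 := by
  set y := τ.symm ⟨m - 1, by omega⟩ with hy
  by_cases hyx : y = x
  · have hh : τ x = ⟨m - 1, by omega⟩ := by rw [← hyx, Equiv.apply_symm_apply]
    rw [hh]
  · have h1 : τ y < τ x := h y hyx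
    have h2 : (τ y : ℕ) = m - 1 := by rw [hy, Equiv.apply_symm_apply]
    have := (τ x).isLt
    rw [Fin.lt_def] at h1
    omega

lemma perm_eq_second {τ : Equiv.Perm (Fin m)} {x x' : Fin m} (hm : 2 ≤ m)
    (hxx' : x ≠ x') (hx' : (τ x' : ℕ) = m - 1)
    (h : ∀ y : Fin m, y ≠ x → y ≠ x' → τ y < τ x) : (τ x : ℕ) = m - 2 := by
  set y := τ.symm ⟨m - 2, by omega⟩ with hy
  have h2 : (τ y : ℕ) = m - 2 := by rw [hy, Equiv.apply_symm_apply]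
  by_cases hyx : y = x
  · rw [← hyx]; exact h2
  · have hyx' : y ≠ x' := by
      intro hh
      rw [hh] at h2; omega
    have h1 : τ y < τ x := h y hyx hyx'
    have h3 : (τ x : ℕ) ≠ m - 1 := by
      intro hh
      exact hxx' (τ.injective (Fin.ext (hh.trans hx'.symm)))
    have := (τ x).isLt
    rw [Fin.lt_def] at h1
    omega

lemma rank_mono (π : Equiv.Perm (Fin n)) {p q : Fin n × Fin n}
    (h1 : p.1 ≤ q.1) (h2 : p.2 ≤ q.2) : rank π p ≤ rank π q := by
  unfold rank
  refine Finset.card_le_card fun k hk => ?_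
  simp only [Finset.mem_filter, Finset.mem_univ, true_and] at *
  exact ⟨lt_of_lt_of_le hk.1 h1, lt_of_lt_of_le hk.2 h2⟩

lemma exists_ess_aux (π : Equiv.Perm (Fin n)) :
    ∀ N : ℕ, ∀ p : Fin n × Fin n, (n - (p.1 : ℕ)) + (n - (p.2 : ℕ)) ≤ N →
      p ∈ Diagram π → ∃ q ∈ EssSet π, rank π p ≤ rank π q := by
  intro N
  induction N with
  | zero =>
    intro p hN _
    have := p.1.isLt
    omega
  | succ N ih =>
    intro p hN hp
    by_cases he : ∃ j' : Fin n, (j' : ℕ) = (p.2 : ℕ) + 1 ∧ (p.1, j') ∈ Diagram π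
    · obtain ⟨j', hj', hd⟩ := he
      obtain ⟨q, hq, hr⟩ := ih (p.1, j') (by have := p.2.isLt; simp only; omega) hd
      refine ⟨q, hq, le_trans (rank_mono π (p := p) (q := (p.1, j')) (le_refl _) ?_) hr⟩
      simp only [Fin.le_def]; omega
    · by_cases hs : ∃ i' : Fin n, (i' : ℕ) = (p.1 : ℕ) + 1 ∧ (i', p.2) ∈ Diagram π
      · obtain ⟨i', hi', hd⟩ := hs
        obtain ⟨q, hq, hr⟩ := ih (i', p.2) (by have := p.1.isLt; simp only; omega) hd
        refine ⟨q, hq, le_trans (rank_mono π (p := p) (q := (i', p.2)) ?_ (le_refl _)) hr⟩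
        simp only [Fin.le_def]; omega
      · refine ⟨p, ⟨hp, ?_, ?_⟩, le_refl _⟩
        · intro i' h1 h2; exact hs ⟨i', h1, h2⟩
        · intro j' h1 h2; exact he ⟨j', h1, h2⟩

/-- The key combinatorial condition. -/
def BigDescent (m : ℕ) {n : ℕ} (π : Equiv.Perm (Fin n)) : Prop :=
  ∃ a b : Fin n, a < b ∧ π b < π a ∧
    m - 2 ≤ (Finset.univ.filter fun k : Fin n => k < a ∧ π k < π b).card

lemma lemB (π : Equiv.Perm (Fin n)) :
    BigDescent m π ↔ ∃ p ∈ EssSet π, m - 2 ≤ rank π p := by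
  constructor
  · rintro ⟨a, b, hab, hba, hcard⟩
    have hd : (a, π b) ∈ Diagram π := by
      refine ⟨hba, ?_⟩
      simpa using hab
    obtain ⟨q, hq, hr⟩ := exists_ess_aux π (n + n) (a, π b) (by omega) hd
    have hcard' : m - 2 ≤ rank π (a, π b) := by simpa [rank] using hcard
    exact ⟨q, hq, le_trans hcard' hr⟩
  · rintro ⟨p, hp, hr⟩
    obtain ⟨⟨h1, h2⟩, -, -⟩ := hp
    refine ⟨p.1, π.symm p.2, h2, ?_, ?_⟩
    · simpa using h1
    · simpa [rank] using hr

lemma lemA (hm : 2 < m) (π : Equiv.Perm (Fin n)) :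
    (∃ τ : Equiv.Perm (Fin m),
      (τ ⟨m - 2, by omega⟩ : ℕ) = m - 1 ∧ (τ ⟨m - 1, by omega⟩ : ℕ) = m - 2 ∧
      Contains π τ) ↔ BigDescent m π := by
  constructor
  · rintro ⟨τ, hτ1, hτ2, f, hf, hiff⟩
    refine ⟨f ⟨m - 2, by omega⟩, f ⟨m - 1, by omega⟩,
      hf (by rw [Fin.lt_def]; simp only; omega), ?_, ?_⟩
    · refine (hiff _ _).1 ?_
      rw [Fin.lt_def]
      omega
    · have hsub : (Finset.Iio (⟨m - 2, by omega⟩ : Fin m)).image f ⊆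
          Finset.univ.filter fun k : Fin n =>
            k < f ⟨m - 2, by omega⟩ ∧ π k < π (f ⟨m - 1, by omega⟩) := by
        intro k hk
        simp only [Finset.mem_image, Finset.mem_Iio] at hk
        obtain ⟨j, hj, rfl⟩ := hk
        rw [Fin.lt_def] at hj
        simp only [Fin.val_mk] at hj
        simp only [Finset.mem_filter, Finset.mem_univ, true_and]
        constructor
        · exact hf (by rw [Fin.lt_def]; simp only [Fin.val_mk]; omega)
        · refine (hiff _ _).1 ?_
          have hne1 : τ j ≠ τ ⟨m - 1, by omega⟩ := by
            intro hh
            have h5 := τ.injective hh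
            have h6 : (j : ℕ) = m - 1 := congrArg Fin.val h5
            omega
          have hne2 : τ j ≠ τ ⟨m - 2, by omega⟩ := by
            intro hh
            have h5 := τ.injective hh
            have h6 : (j : ℕ) = m - 2 := congrArg Fin.val h5
            omega
          have h1 : (τ j : ℕ) ≠ m - 2 := by
            intro hh; exact hne1 (Fin.ext (hh.trans hτ2.symm))
          have h2 : (τ j : ℕ) ≠ m - 1 := by
            intro hh; exact hne2 (Fin.ext (hh.trans hτ1.symm))
          have h3 := (τ j).isLt
          rw [Fin.lt_def]
          omega
      calc m - 2 = ((Finset.Iio (⟨m - 2, by omega⟩ : Fin m)).image f).card := by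
            rw [Finset.card_image_of_injective _ hf.injective, Fin.card_Iio]
        _ ≤ _ := Finset.card_le_card hsub
  · rintro ⟨a, b, hab, hba, hcard⟩
    classical
    obtain ⟨S, hSsub, hScard⟩ := Finset.exists_subset_card_eq hcard
    set f : Fin m → Fin n := fun i =>
      if h : (i : ℕ) < m - 2 then (S.orderIsoOfFin hScard ⟨i, h⟩ : Fin n)
      else if (i : ℕ) = m - 2 then a else b with hfdef
    have hmemS : ∀ x ∈ S, x < a ∧ π x < π b := by
      intro x hx
      have h5 := hSsub hx
      simp only [Finset.mem_filter, Finset.mem_univ, true_and] at h5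
      exact h5
    have hfS : ∀ (i : Fin m) (h : (i : ℕ) < m - 2), f i ∈ S := by
      intro i h
      simp only [hfdef, dif_pos h]
      exact (S.orderIsoOfFin hScard ⟨i, h⟩).2
    have hfa : ∀ (i : Fin m), (i : ℕ) = m - 2 → f i = a := by
      intro i h
      simp only [hfdef]
      rw [dif_neg (by omega), if_pos h]
    have hfb : ∀ (i : Fin m), (i : ℕ) = m - 1 → f i = b := by
      intro i h
      simp only [hfdef]
      rw [dif_neg (by omega), if_neg (by omega)]
    have hmono : StrictMono f := by
      intro i j hij
      rw [Fin.lt_def] at hij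
      have hjlt := j.isLt
      by_cases hj2 : (j : ℕ) < m - 2
      · have hi2 : (i : ℕ) < m - 2 := by omega
        simp only [hfdef, dif_pos hj2, dif_pos hi2]
        exact Subtype.coe_lt_coe.2 ((S.orderIsoOfFin hScard).lt_iff_lt.2
          (by rw [Fin.lt_def]; exact hij))
      · by_cases hj3 : (j : ℕ) = m - 2
        · have hi2 : (i : ℕ) < m - 2 := by omega
          rw [hfa j hj3]
          exact (hmemS _ (hfS i hi2)).1
        · have hj4 : (j : ℕ) = m - 1 := by omega
          rw [hfb j hj4]
          by_cases hi2 : (i : ℕ) < m - 2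
          · exact lt_trans (hmemS _ (hfS i hi2)).1 hab
          · have hi3 : (i : ℕ) = m - 2 := by omega
            rw [hfa i hi3]
            exact hab
    have hg : Function.Injective (π ∘ f) := π.injective.comp hmono.injective
    set τ := patternOf (π ∘ f) hg with hτ
    have hlt : ∀ a b : Fin m, τ a < τ b ↔ π (f a) < π (f b) := by
      intro a b
      exact patternOf_lt_iff (π ∘ f) hg a b
    have hvals : ∀ (i : Fin m), (i : ℕ) ≠ m - 2 → (i : ℕ) ≠ m - 1 →
        π (f i) < π (f ⟨m - 1, by omega⟩) := by
      intro i h1 h2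
      have hi2 : (i : ℕ) < m - 2 := by have := i.isLt; omega
      rw [hfb ⟨m - 1, by omega⟩ rfl]
      exact (hmemS _ (hfS i hi2)).2
    have hmax : (τ ⟨m - 2, by omega⟩ : ℕ) = m - 1 := by
      refine perm_eq_last (by omega) ?_
      intro y hy
      rw [hlt, hfa ⟨m - 2, by omega⟩ rfl]
      have hyne : (y : ℕ) ≠ m - 2 := by
        intro hh; exact hy (Fin.ext hh)
      by_cases hy1 : (y : ℕ) = m - 1
      · rw [hfb y hy1]; exact hba
      · calc π (f y) < π (f ⟨m - 1, by omega⟩) := hvals y hyne hy1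
          _ = π b := by rw [hfb ⟨m - 1, by omega⟩ rfl]
          _ < π a := hba
    have hsec : (τ ⟨m - 1, by omega⟩ : ℕ) = m - 2 := by
      refine perm_eq_second (by omega) ?_ hmax ?_
      · intro hh
        have := congrArg Fin.val hh
        simp only [Fin.val_mk] at this
        omega
      · intro y hy1 hy2
        rw [hlt]
        refine hvals y ?_ ?_
        · intro hh; exact hy2 (Fin.ext hh)
        · intro hh; exact hy1 (Fin.ext hh)
    exact ⟨τ, hmax, hsec, f, hmono, hlt⟩

end Aux

theorem avoids_Tm_iff_rank_le (n m : ℕ) (hm : 3 ≤ m) (π : Equiv.Perm (Fin n)) :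
    (∀ τ : Equiv.Perm (Fin m),
        (τ ⟨m - 2, by omega⟩ : ℕ) = m - 1 → (τ ⟨m - 1, by omega⟩ : ℕ) = m - 2 →
        Avoids π τ) ↔
      ∀ p ∈ EssSet π, rank π p ≤ m - 3 := by
  constructor
  · intro h p hp
    by_contra hcon
    push_neg at hcon
    have hP : BigDescent m π := (lemB π).2 ⟨p, hp, by omega⟩
    obtain ⟨τ, h1, h2, hc⟩ := (lemA hm π).2 hP
    exact h τ h1 h2 hc
  · intro h τ h1 h2 hc
    obtain ⟨p, hp, hr⟩ := (lemB π).1 ((lemA hm π).1 ⟨τ, h1, h2, hc⟩)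
    have := h p hp
    omega
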